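/- arXiv:2210.14247 — 2 statements merged into one kernel-verified Lean document; each statement's English description precedes it below -/
import Mathlib

section
/- For all X, Y, W ∈ evC: (i) rows(X ⊠ Y) = rows(X) + rows(Y); (ii) cols(X ⊠ Y) = cols(X) + cols(Y); (iii) (X ⊠ Y) ⊠ W = X ⊠ (Y ⊠ W); (iv) δ(X ⊠ Y) = δ(X) ⊘ δ(Y). -/
open scoped Classical

namespace TwoParam

/-! ### The free commutative monoid on `d` generators, written additively -/

abbrev Md (d : ℕ) := Fin d →₀ ℕ

/-! ### Raw matrices over `Md d` and matrix compositions

A raw matrix is a function `ℕ → ℕ → Md d` together with a number of rows and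
columns, normalized to be `0` (= the neutral element `ε`) outside the range.
The empty composition is the `0 × 0` matrix. -/

structure RawMat (d : ℕ) where
  rows : ℕ
  cols : ℕ
  entry : ℕ → ℕ → Md d
  entry_eq_zero : ∀ i j : ℕ, rows ≤ i ∨ cols ≤ j → entry i j = 0

namespace RawMat

variable {d : ℕ}

/-- A matrix composition: no row and no column consists entirely of `ε`.
(The empty `0 × 0` matrix vacuously satisfies this.) -/
def IsComp (a : RawMat d) : Prop :=
  (∀ i < a.rows, ∃ j < a.cols, a.entry i j ≠ 0) ∧
  (∀ j < a.cols, ∃ i < a.rows, a.entry i j ≠ 0)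

/-- The empty composition. -/
def empty (d : ℕ) : RawMat d := ⟨0, 0, fun _ _ => 0, fun _ _ _ => rfl⟩

/-- Diagonal block concatenation of two matrices. -/
def diag (a b : RawMat d) : RawMat d where
  rows := a.rows + b.rows
  cols := a.cols + b.cols
  entry := fun i j =>
    if i < a.rows ∧ j < a.cols then a.entry i j
    else if a.rows ≤ i ∧ a.cols ≤ j then b.entry (i - a.rows) (j - a.cols)
    else 0
  entry_eq_zero := by
    intro i j h
    try dsimp only
    split_ifs with h1 h2
    · exact absurd h (by omega)
    · exact b.entry_eq_zero _ _ (by omega)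
    · rfl

/-- A non-empty composition is connected if it admits no nontrivial
block-diagonal decomposition into compositions. -/
def Connected (a : RawMat d) : Prop :=
  a.IsComp ∧ a ≠ empty d ∧
    ∀ b c : RawMat d, b.IsComp → c.IsComp → a = b.diag c →
      b = empty d ∨ c = empty d

/-- Total weight of a matrix: the homomorphism `Md d → ℕ` sending every
generator to `1`, summed over all entries. -/
def weight (a : RawMat d) : ℕ :=
  ∑ i ∈ Finset.range a.rows, ∑ j ∈ Finset.range a.cols,
    (a.entry i j).sum fun _ e => e

end RawMat

/-! ### Evaluation of monomials -/

/-- For `z ∈ R^d` and `m ∈ Md d`, the evaluation `z^(m) = ∏ j, z j ^ m j`. -/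
def evalMon {d : ℕ} {R : Type*} [CommRing R] (z : Fin d → R) (m : Md d) : R :=
  m.prod fun j e => z j ^ e

/-! ### Two-parameter sums signature -/

/-- Strictly increasing chains of length `m` with values in `[lo, hi)`
(0-based indexing of the data). -/
noncomputable def chainsB (m lo hi : ℕ) : Finset (Fin m → ℕ) :=
  (Fintype.piFinset fun _ : Fin m => Finset.Ico lo hi).filter StrictMono

/-- The bounded two-parameter sums signature coefficient `⟨SS_{l;r}(Z), a⟩`. -/
noncomputable def SSb {d : ℕ} {R : Type*} [CommRing R]
    (Z : ℕ × ℕ → Fin d → R) (l r : ℕ × ℕ) (a : RawMat d) : R :=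
  ∑ ι ∈ chainsB a.rows l.1 r.1, ∑ κ ∈ chainsB a.cols l.2 r.2,
    ∏ s : Fin a.rows, ∏ t : Fin a.cols, evalMon (Z (ι s, κ t)) (a.entry s t)

/-- The (unbounded) two-parameter sums signature coefficient `⟨SS(Z), a⟩`,
for finitely supported `Z` a finite sum. -/
noncomputable def SSc {d : ℕ} {R : Type*} [CommRing R]
    (Z : ℕ × ℕ → Fin d → R) (a : RawMat d) : R :=
  ∑ᶠ ι ∈ {f : Fin a.rows → ℕ | StrictMono f},
    ∑ᶠ κ ∈ {g : Fin a.cols → ℕ | StrictMono g},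
      ∏ s : Fin a.rows, ∏ t : Fin a.cols, evalMon (Z (ι s, κ t)) (a.entry s t)

/-! ### Quasi-shuffle surjections -/

/-- `qShSet m s j`: surjections `{1,…,m+s} ↠ {1,…,j}` that are strictly
increasing on the first `m` and on the last `s` arguments. -/
noncomputable def qShSet (m s j : ℕ) : Finset (Fin (m + s) → Fin j) :=
  Finset.univ.filter fun q =>
    Function.Surjective q ∧
    (∀ u v : Fin (m + s), u < v → (v : ℕ) < m → q u < q v) ∧
    (∀ u v : Fin (m + s), u < v → m ≤ (u : ℕ) → q u < q v)

/-- The summand `c^{p,q}` of the two-parameter quasi-shuffle: the `j × k`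
matrix with entries `⋆_{u ∈ p⁻¹(x), v ∈ q⁻¹(y)} diag(a,b)_{u,v}`. -/
noncomputable def qshMat {d : ℕ} (a b : RawMat d) {j k : ℕ}
    (p : Fin (a.rows + b.rows) → Fin j) (q : Fin (a.cols + b.cols) → Fin k) :
    RawMat d where
  rows := j
  cols := k
  entry := fun x y =>
    if hx : x < j then
      if hy : y < k then
        ∑ u ∈ Finset.univ.filter (fun u => p u = ⟨x, hx⟩),
          ∑ v ∈ Finset.univ.filter (fun v => q v = ⟨y, hy⟩),
            (a.diag b).entry u v
      else 0
    else 0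
  entry_eq_zero := by
    intro x y h
    try dsimp only
    split_ifs with hx hy
    · exact absurd h (by omega)
    · rfl
    · rfl

/-- The two-parameter quasi-shuffle `a ⧢ b`, as an element of the free
`R`-module on matrices.  (The empty index sets for `j` or `k` outside
`[0, rows+rows]` resp. `[0, cols+cols]` implement the conventions
`e ⧢ a = a ⧢ e = a` and `e ⧢ e = e`.) -/
noncomputable def qsh {d : ℕ} (R : Type*) [CommRing R] (a b : RawMat d) :
    RawMat d →₀ R :=
  ∑ j ∈ Finset.range (a.rows + b.rows + 1),
    ∑ k ∈ Finset.range (a.cols + b.cols + 1),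
      ∑ p ∈ qShSet a.rows b.rows j,
        ∑ q ∈ qShSet a.cols b.cols k,
          Finsupp.single (qshMat a b p q) 1

/-- Bilinear extension of the quasi-shuffle to the free module. -/
noncomputable def qshL {d : ℕ} {R : Type*} [CommRing R]
    (F G : RawMat d →₀ R) : RawMat d →₀ R :=
  F.sum fun a ra => G.sum fun b rb => (ra * rb) • qsh R a b

/-! ### Two-parameter data: eventually zero / eventually constant functions -/

variable {V : Type*}

/-- Eventually zero two-parameter data: finite support. -/
def EvZ [Zero V] (X : ℕ × ℕ → V) : Prop := (Function.support X).Finite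

/-- Eventually constant two-parameter data: there is a box outside of which
`X` is constant; i.e. whenever two values differ, one of the two indices lies
in the box. -/
def EvC (X : ℕ × ℕ → V) : Prop :=
  ∃ n : ℕ × ℕ, ∀ i j : ℕ × ℕ, X i ≠ X j →
    (i.1 ≤ n.1 ∧ i.2 ≤ n.2) ∨ (j.1 ≤ n.1 ∧ j.2 ≤ n.2)

/-- The coordinate of `i` along the axis `a` (axis `0` = rows, `1` = cols). -/
def axC (a : Fin 2) (i : ℕ × ℕ) : ℕ := if a = 0 then i.1 else i.2

/-- Shift an index one step down along the axis `a`. -/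
def shiftD (a : Fin 2) (i : ℕ × ℕ) : ℕ × ℕ :=
  if a = 0 then (i.1 - 1, i.2) else (i.1, i.2 - 1)

/-- The zero insertion operator (0-based position `k`): insert a zero
row/column at position `k` along axis `a`. -/
def zeroIns [Zero V] (a : Fin 2) (k : ℕ) (X : ℕ × ℕ → V) : ℕ × ℕ → V :=
  fun i => if axC a i < k then X i else if axC a i = k then 0 else X (shiftD a i)

/-- The warping operator (0-based position `k`): duplicate the row/column at
position `k` along axis `a`. -/
def warp (a : Fin 2) (k : ℕ) (X : ℕ × ℕ → V) : ℕ × ℕ → V :=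
  fun i => if axC a i ≤ k then X i else X (shiftD a i)

/-- The two-parameter (forward) difference operator `δ`. -/
def diffOp [AddCommGroup V] (X : ℕ × ℕ → V) : ℕ × ℕ → V := fun i =>
  X (i.1 + 1, i.2 + 1) - X (i.1 + 1, i.2) - X (i.1, i.2 + 1) + X (i.1, i.2)

/-- The summation operator `ς`, a right inverse of `δ`:
`(ς Z)_{i,j} = Σ_{s ≥ i} Σ_{t ≥ j} Z_{s,t}`. -/
noncomputable def sigmaOp [AddCommMonoid V] (Z : ℕ × ℕ → V) : ℕ × ℕ → V :=
  fun i => ∑ᶠ p ∈ {p : ℕ × ℕ | i.1 ≤ p.1 ∧ i.2 ≤ p.2}, Z p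

/-- The set of all `n ∈ ℕ²` such that `X` is determined inside the
`n.1 × n.2` upper-left box (0-based size/count convention). -/
def sizeSetC (X : ℕ × ℕ → V) : Set (ℕ × ℕ) :=
  {n | ∀ i j : ℕ × ℕ, X i ≠ X j →
    (i.1 < n.1 ∧ i.2 < n.2) ∨ (j.1 < n.1 ∧ j.2 < n.2)}

/-- `rows(X)` for eventually constant `X`: first component of the least
element of `sizeSetC X`. -/
noncomputable def rowsC (X : ℕ × ℕ → V) : ℕ := sInf (Prod.fst '' sizeSetC X)

/-- `cols(X)` for eventually constant `X`. -/
noncomputable def colsC (X : ℕ × ℕ → V) : ℕ := sInf (Prod.snd '' sizeSetC X)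

/-- `rows(Z)` for eventually zero `Z`, defined via the support. -/
noncomputable def rowsZ [Zero V] (Z : ℕ × ℕ → V) : ℕ :=
  sInf {m : ℕ | ∀ i : ℕ × ℕ, Z i ≠ 0 → i.1 < m}

/-- `cols(Z)` for eventually zero `Z`, defined via the support. -/
noncomputable def colsZ [Zero V] (Z : ℕ × ℕ → V) : ℕ :=
  sInf {m : ℕ | ∀ i : ℕ × ℕ, Z i ≠ 0 → i.2 < m}

/-- Diagonal concatenation `A ⊘ B` on eventually zero functions,
with `rows`/`cols` taken in the eventually-constant sense. -/
noncomputable def dconc [AddCommGroup V] (A B : ℕ × ℕ → V) : ℕ × ℕ → V :=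
  A + (zeroIns 0 0)^[rowsC A] ((zeroIns 1 0)^[colsC A] B)

/-- Diagonal concatenation `A ⊘ B` on eventually zero functions,
with `rows`/`cols` taken in the support sense. -/
noncomputable def dconcZ [AddCommGroup V] (A B : ℕ × ℕ → V) : ℕ × ℕ → V :=
  A + (zeroIns 0 0)^[rowsZ A] ((zeroIns 1 0)^[colsZ A] B)

/-- Concatenation along the diagonal `X ⊠ Y` on eventually constant
functions: `ς(δX) + Warp_{1,1}^{rows X}(Warp_{2,1}^{cols X}(Y))`. -/
noncomputable def bconc [AddCommGroup V] (X Y : ℕ × ℕ → V) : ℕ × ℕ → V :=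
  sigmaOp (diffOp X) + (warp 0 0)^[rowsC X] ((warp 1 0)^[colsC X] Y)


/-! ### Two-parameter quasisymmetric functions -/

/-- Monomials in the commuting variables `x_{i,j}`, `(i,j) ∈ ℕ × ℕ`. -/
abbrev Mon := (ℕ × ℕ) →₀ ℕ

/-- Total degree of a monomial. -/
def mdeg (m : Mon) : ℕ := m.sum fun _ e => e

/-- A formal power series (given by its coefficient function) has finite
total degree. -/
def FinDeg {R : Type*} [Zero R] (f : Mon → R) : Prop :=
  ∃ D : ℕ, ∀ m : Mon, f m ≠ 0 → mdeg m ≤ D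

/-- `ℕ₀`-valued raw matrices, normalized to vanish outside the range. -/
structure NMat where
  rows : ℕ
  cols : ℕ
  entry : ℕ → ℕ → ℕ
  entry_eq_zero : ∀ i j : ℕ, rows ≤ i ∨ cols ≤ j → entry i j = 0

namespace NMat

/-- An `ℕ₀`-matrix composition: no zero row and no zero column. -/
def IsComp (a : NMat) : Prop :=
  (∀ i < a.rows, ∃ j < a.cols, a.entry i j ≠ 0) ∧
  (∀ j < a.cols, ∃ i < a.rows, a.entry i j ≠ 0)

/-- The empty composition. -/
def empty : NMat := ⟨0, 0, fun _ _ => 0, fun _ _ _ => rfl⟩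

/-- Diagonal block concatenation. -/
def diag (a b : NMat) : NMat where
  rows := a.rows + b.rows
  cols := a.cols + b.cols
  entry := fun i j =>
    if i < a.rows ∧ j < a.cols then a.entry i j
    else if a.rows ≤ i ∧ a.cols ≤ j then b.entry (i - a.rows) (j - a.cols)
    else 0
  entry_eq_zero := by
    intro i j h
    try dsimp only
    split_ifs with h1 h2
    · exact absurd h (by omega)
    · exact b.entry_eq_zero _ _ (by omega)
    · rfl

end NMat

/-- The monomial `∏_{s,t} x_{ι_s, κ_t}^{a_{s,t}}` attached to a matrix `a`
and chains `ι`, `κ`. -/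
noncomputable def monomialOf (a : NMat) (ι : Fin a.rows → ℕ) (κ : Fin a.cols → ℕ) : Mon :=
  ∑ s : Fin a.rows, ∑ t : Fin a.cols, Finsupp.single (ι s, κ t) (a.entry s t)

/-- The monomial quasisymmetric function `M_a` (as a coefficient function):
each monomial `∏ x_{ι_s,κ_t}^{a_{s,t}}` for strictly increasing chains occurs
with coefficient `1`.  In particular `M_e = 1`. -/
noncomputable def monQ {R : Type*} [CommRing R] (a : NMat) : Mon → R := fun m =>
  if ∃ (ι : Fin a.rows → ℕ) (κ : Fin a.cols → ℕ),
      StrictMono ι ∧ StrictMono κ ∧ m = monomialOf a ι κ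
  then 1 else 0

/-- Two-parameter quasisymmetric function: finite degree, and for every
matrix composition `a` and all strictly increasing chains `ι`, `κ`, the
coefficients of `∏ x_{ι_s,κ_t}^{a_{s,t}}` and of `∏ x_{s,t}^{a_{s,t}}`
coincide. -/
def IsQSym {R : Type*} [CommRing R] (f : Mon → R) : Prop :=
  FinDeg f ∧ ∀ a : NMat, a.IsComp →
    ∀ (ι : Fin a.rows → ℕ) (κ : Fin a.cols → ℕ), StrictMono ι → StrictMono κ →
      f (monomialOf a ι κ) =
        f (monomialOf a (fun s => (s : ℕ)) (fun t => (t : ℕ)))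

/-- Product of formal power series (Cauchy product of coefficient
functions). -/
noncomputable def mulF {R : Type*} [CommRing R] (f g : Mon → R) : Mon → R :=
  fun m => ∑ p ∈ Finset.HasAntidiagonal.antidiagonal m, f p.1 * g p.2

/-- Two-parameter quasisymmetric functions form an `R`-submodule of the
module of coefficient functions. -/
noncomputable def QSymSub (R : Type*) [CommRing R] : Submodule R (Mon → R) where
  carrier := {f | IsQSym f}
  add_mem' := by
    rintro f g ⟨⟨Df, hDf⟩, hf⟩ ⟨⟨Dg, hDg⟩, hg⟩
    refine ⟨⟨max Df Dg, ?_⟩, ?_⟩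
    · intro m hm
      by_contra hc
      push_neg at hc
      have h1 : f m = 0 := by
        by_contra h
        have := hDf m h
        omega
      have h2 : g m = 0 := by
        by_contra h
        have := hDg m h
        omega
      apply hm
      show f m + g m = 0
      rw [h1, h2, add_zero]
    · intro a ha ι κ hι hκ
      show f _ + g _ = f _ + g _
      rw [hf a ha ι κ hι hκ, hg a ha ι κ hι hκ]
  zero_mem' := ⟨⟨0, fun _ hm => absurd rfl hm⟩, fun _ _ _ _ _ _ => rfl⟩
  smul_mem' := by
    rintro c f ⟨⟨Df, hDf⟩, hf⟩
    refine ⟨⟨Df, ?_⟩, ?_⟩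
    · intro m hm
      apply hDf
      intro h
      apply hm
      show c • f m = 0
      rw [h, smul_zero]
    · intro a ha ι κ hι hκ
      show c • f _ = c • f _
      rw [hf a ha ι κ hι hκ]

/-- Index shift used by the free analogue of zero insertion: indices with
coordinate `≥ k` along axis `a` are shifted up by one (axis `0` = rows). -/
def liftIdx (a : Fin 2) (k : ℕ) (i : ℕ × ℕ) : ℕ × ℕ :=
  if a = 0 then (if i.1 < k then i else (i.1 + 1, i.2))
  else (if i.2 < k then i else (i.1, i.2 + 1))

/-- The free analogue of zero insertion on formal power series: the algebra
endomorphism sending `x_i ↦ x_i` for `i_a < k`, `x_i ↦ 0` for `i_a = k` and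
`x_i ↦ x_{i - e_a}` for `i_a > k` (0-based position `k`).  On coefficient
functions it is given by precomposition with the index lift. -/
noncomputable def zeroF {R : Type*} [CommRing R] (a : Fin 2) (k : ℕ)
    (f : Mon → R) : Mon → R :=
  fun m => f (m.mapDomain (liftIdx a k))

/-- The quasi-shuffle summand `c^{p,q}` for `ℕ₀`-matrices. -/
noncomputable def nQshMat (a b : NMat) {j k : ℕ}
    (p : Fin (a.rows + b.rows) → Fin j) (q : Fin (a.cols + b.cols) → Fin k) :
    NMat where
  rows := j
  cols := k
  entry := fun x y =>
    if hx : x < j then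
      if hy : y < k then
        ∑ u ∈ Finset.univ.filter (fun u => p u = ⟨x, hx⟩),
          ∑ v ∈ Finset.univ.filter (fun v => q v = ⟨y, hy⟩),
            (a.diag b).entry u v
      else 0
    else 0
  entry_eq_zero := by
    intro x y h
    try dsimp only
    split_ifs with hx hy
    · exact absurd h (by omega)
    · rfl
    · rfl

/-- One-dimensional two-parameter sums signature coefficient `⟨SS(Z), a⟩`. -/
noncomputable def SScN {K : Type*} [CommRing K] (Z : ℕ × ℕ → K) (a : NMat) : K :=
  ∑ᶠ ι ∈ {f : Fin a.rows → ℕ | StrictMono f},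
    ∑ᶠ κ ∈ {g : Fin a.cols → ℕ | StrictMono g},
      ∏ s : Fin a.rows, ∏ t : Fin a.cols, Z (ι s, κ t) ^ a.entry s t

/-- Evaluation of a formal power series at finitely supported data. -/
noncomputable def evalSeries {K : Type*} [CommRing K] (f : Mon → K)
    (Z : ℕ × ℕ → K) : K :=
  ∑ᶠ m : Mon, f m * m.prod fun i e => Z i ^ e

end TwoParam

namespace TwoParamAux
open TwoParam

variable {V : Type*} [AddCommGroup V]

/-- `X` equals `c` outside the strict box `[0,m) × [0,n)`. -/
def Boxed (m n : ℕ) (c : V) (X : ℕ × ℕ → V) : Prop :=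
  ∀ i : ℕ × ℕ, m ≤ i.1 ∨ n ≤ i.2 → X i = c

lemma Boxed.evC {m n : ℕ} {c : V} {X : ℕ × ℕ → V} (h : Boxed m n c X) : EvC X := by
  refine ⟨(m, n), fun i j hij => ?_⟩
  by_contra hcon
  exact hij (by rw [h i (by omega), h j (by omega)])

lemma mem_sizeSetC_of_boxed {m n : ℕ} {c : V} {X : ℕ × ℕ → V} (h : Boxed m n c X) :
    (m, n) ∈ sizeSetC X := by
  intro i j hij
  by_contra hcon
  exact hij (by rw [h i (by omega), h j (by omega)])

lemma rowsC_le {m n : ℕ} {c : V} {X : ℕ × ℕ → V} (h : Boxed m n c X) : rowsC X ≤ m :=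
  Nat.sInf_le ⟨(m, n), mem_sizeSetC_of_boxed h, rfl⟩

lemma colsC_le {m n : ℕ} {c : V} {X : ℕ × ℕ → V} (h : Boxed m n c X) : colsC X ≤ n :=
  Nat.sInf_le ⟨(m, n), mem_sizeSetC_of_boxed h, rfl⟩

lemma boxed_congr {m n m' n' : ℕ} {c c' : V} {X : ℕ × ℕ → V}
    (h : Boxed m n c X) (h' : Boxed m' n' c' X) : c = c' := by
  have h1 := h (m + m', 0) (Or.inl (by omega))
  have h2 := h' (m + m', 0) (Or.inl (by omega))
  exact h1.symm.trans h2

lemma exists_boxed {X : ℕ × ℕ → V} (hX : EvC X) :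
    ∃ c, Boxed (rowsC X) (colsC X) c X := by
  obtain ⟨n, hn⟩ := hX
  set c := X (n.1 + 1, n.2 + 1) with hc
  have hmem : (n.1 + 1, n.2 + 1) ∈ sizeSetC X := by
    intro i j hij
    rcases hn i j hij with h | h
    · exact Or.inl (by omega)
    · exact Or.inr (by omega)
  have hfar : ∀ a b : ℕ, n.1 < a → n.2 < b → X (a, b) = c := by
    intro a b h1 h2
    by_contra hne
    rcases hn (a, b) (n.1 + 1, n.2 + 1) hne with h | h <;> dsimp at h <;> omega
  have hne1 : (Prod.fst '' sizeSetC X).Nonempty := ⟨n.1 + 1, _, hmem, rfl⟩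
  have hne2 : (Prod.snd '' sizeSetC X).Nonempty := ⟨n.2 + 1, _, hmem, rfl⟩
  obtain ⟨p, hp, hp1⟩ := Nat.sInf_mem hne1
  obtain ⟨q, hq, hq2⟩ := Nat.sInf_mem hne2
  refine ⟨c, fun i hi => ?_⟩
  rcases hi with hi | hi
  · have hXj : X (n.1 + p.1 + 1, n.2 + p.2 + 1) = c := hfar _ _ (by omega) (by omega)
    by_contra hne
    have hd := hp i (n.1 + p.1 + 1, n.2 + p.2 + 1) (by rw [hXj]; exact hne)
    dsimp at hd
    have hp1' : rowsC X = p.1 := hp1.symm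
    omega
  · have hXj : X (n.1 + q.1 + 1, n.2 + q.2 + 1) = c := hfar _ _ (by omega) (by omega)
    by_contra hne
    have hd := hq i (n.1 + q.1 + 1, n.2 + q.2 + 1) (by rw [hXj]; exact hne)
    dsimp at hd
    have hq2' : colsC X = q.2 := hq2.symm
    omega

lemma rowsC_le_of {X : ℕ × ℕ → V} {c : V} {r : ℕ}
    (hc : Boxed (rowsC X) (colsC X) c X)
    (hr : ∀ i : ℕ × ℕ, r ≤ i.1 → X i = c) : rowsC X ≤ r := by
  refine Nat.sInf_le ⟨(r, colsC X), ?_, rfl⟩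
  intro i j hij
  by_contra hcon
  have hXi : X i = c := by
    rcases (by omega : r ≤ i.1 ∨ colsC X ≤ i.2) with h | h
    · exact hr i h
    · exact hc i (Or.inr h)
  have hXj : X j = c := by
    rcases (by omega : r ≤ j.1 ∨ colsC X ≤ j.2) with h | h
    · exact hr j h
    · exact hc j (Or.inr h)
  exact hij (hXi.trans hXj.symm)

lemma colsC_le_of {X : ℕ × ℕ → V} {c : V} {r : ℕ}
    (hc : Boxed (rowsC X) (colsC X) c X)
    (hr : ∀ i : ℕ × ℕ, r ≤ i.2 → X i = c) : colsC X ≤ r := by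
  refine Nat.sInf_le ⟨(rowsC X, r), ?_, rfl⟩
  intro i j hij
  by_contra hcon
  have hXi : X i = c := by
    rcases (by omega : rowsC X ≤ i.1 ∨ r ≤ i.2) with h | h
    · exact hc i (Or.inl h)
    · exact hr i h
  have hXj : X j = c := by
    rcases (by omega : rowsC X ≤ j.1 ∨ r ≤ j.2) with h | h
    · exact hc j (Or.inl h)
    · exact hr j h
  exact hij (hXi.trans hXj.symm)

/-! ### warp and zeroIns iterates -/

lemma warp0_apply (X : ℕ × ℕ → V) (i : ℕ × ℕ) : warp 0 0 X i = X (i.1 - 1, i.2) := by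
  have h0 : axC 0 i = i.1 := by simp [axC]
  have hs : shiftD 0 i = (i.1 - 1, i.2) := by simp [shiftD]
  unfold warp
  rw [h0, hs]
  split_ifs with h
  · congr 1
    exact Prod.ext (by dsimp; omega) rfl
  · rfl

lemma warp1_apply (X : ℕ × ℕ → V) (i : ℕ × ℕ) : warp 1 0 X i = X (i.1, i.2 - 1) := by
  have h0 : axC 1 i = i.2 := by simp [axC]
  have hs : shiftD 1 i = (i.1, i.2 - 1) := by simp [shiftD]
  unfold warp
  rw [h0, hs]
  split_ifs with h
  · congr 1
    exact Prod.ext rfl (by dsimp; omega)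
  · rfl

lemma warp0_iter (m : ℕ) (X : ℕ × ℕ → V) :
    (warp 0 0)^[m] X = fun i => X (i.1 - m, i.2) := by
  induction m with
  | zero => simp
  | succ m ih =>
    rw [Function.iterate_succ_apply', ih]
    funext i
    rw [warp0_apply]
    dsimp only
    congr 1
    exact Prod.ext (by dsimp; omega) rfl

lemma warp1_iter (n : ℕ) (X : ℕ × ℕ → V) :
    (warp 1 0)^[n] X = fun i => X (i.1, i.2 - n) := by
  induction n with
  | zero => simp
  | succ n ih =>
    rw [Function.iterate_succ_apply', ih]
    funext i
    rw [warp1_apply]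
    dsimp only
    congr 1
    exact Prod.ext rfl (by dsimp; omega)

lemma zeroIns0_apply (X : ℕ × ℕ → V) (i : ℕ × ℕ) :
    zeroIns 0 0 X i = if i.1 = 0 then 0 else X (i.1 - 1, i.2) := by
  have h0 : axC 0 i = i.1 := by simp [axC]
  have hs : shiftD 0 i = (i.1 - 1, i.2) := by simp [shiftD]
  unfold zeroIns
  rw [h0, hs, if_neg (by omega)]

lemma zeroIns1_apply (X : ℕ × ℕ → V) (i : ℕ × ℕ) :
    zeroIns 1 0 X i = if i.2 = 0 then 0 else X (i.1, i.2 - 1) := by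
  have h0 : axC 1 i = i.2 := by simp [axC]
  have hs : shiftD 1 i = (i.1, i.2 - 1) := by simp [shiftD]
  unfold zeroIns
  rw [h0, hs, if_neg (by omega)]

lemma zeroIns0_iter (m : ℕ) (X : ℕ × ℕ → V) :
    (zeroIns 0 0)^[m] X = fun i => if i.1 < m then 0 else X (i.1 - m, i.2) := by
  induction m with
  | zero => simp
  | succ m ih =>
    rw [Function.iterate_succ_apply', ih]
    funext i
    rw [zeroIns0_apply]
    dsimp only
    by_cases h : i.1 < m + 1
    · rw [if_pos h]
      by_cases h0 : i.1 = 0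
      · rw [if_pos h0]
      · rw [if_neg h0, if_pos (by omega)]
    · rw [if_neg h, if_neg (by omega), if_neg (by omega)]
      congr 1
      exact Prod.ext (by dsimp; omega) rfl

lemma zeroIns1_iter (n : ℕ) (X : ℕ × ℕ → V) :
    (zeroIns 1 0)^[n] X = fun i => if i.2 < n then 0 else X (i.1, i.2 - n) := by
  induction n with
  | zero => simp
  | succ n ih =>
    rw [Function.iterate_succ_apply', ih]
    funext i
    rw [zeroIns1_apply]
    dsimp only
    by_cases h : i.2 < n + 1
    · rw [if_pos h]
      by_cases h0 : i.2 = 0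
      · rw [if_pos h0]
      · rw [if_neg h0, if_pos (by omega)]
    · rw [if_neg h, if_neg (by omega), if_neg (by omega)]
      congr 1
      exact Prod.ext rfl (by dsimp; omega)

/-! ### telescoping -/

lemma diffOp_boxed {m n : ℕ} {c : V} {X : ℕ × ℕ → V} (h : Boxed m n c X) :
    Boxed m n (0 : V) (diffOp X) := by
  intro i hi
  unfold diffOp
  rcases hi with hi | hi
  · rw [h (i.1 + 1, i.2 + 1) (Or.inl (show m ≤ i.1 + 1 by omega)),
      h (i.1 + 1, i.2) (Or.inl (show m ≤ i.1 + 1 by omega)),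
      h (i.1, i.2 + 1) (Or.inl hi), h (i.1, i.2) (Or.inl hi)]
    abel
  · rw [h (i.1 + 1, i.2 + 1) (Or.inr (show n ≤ i.2 + 1 by omega)),
      h (i.1 + 1, i.2) (Or.inr hi),
      h (i.1, i.2 + 1) (Or.inr (show n ≤ i.2 + 1 by omega)), h (i.1, i.2) (Or.inr hi)]
    abel

lemma tele (G : ℕ → V) (a N : ℕ) :
    ∑ t ∈ Finset.Ico a (a + N), (G (t + 1) - G t) = G (a + N) - G a := by
  induction N with
  | zero => simp
  | succ N ih =>
    rw [show a + (N + 1) = (a + N) + 1 from rfl,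
      Finset.sum_Ico_succ_top (by omega), ih]
    abel

lemma rect (X : ℕ × ℕ → V) (a b M N : ℕ) :
    ∑ s ∈ Finset.Ico a (a + M), ∑ t ∈ Finset.Ico b (b + N), diffOp X (s, t)
      = X (a + M, b + N) - X (a + M, b) - X (a, b + N) + X (a, b) := by
  have inner : ∀ s, ∑ t ∈ Finset.Ico b (b + N), diffOp X (s, t)
      = (X (s + 1, b + N) - X (s, b + N)) - (X (s + 1, b) - X (s, b)) := by
    intro s
    have h := tele (fun t => X (s + 1, t) - X (s, t)) b N
    calc ∑ t ∈ Finset.Ico b (b + N), diffOp X (s, t)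
        = ∑ t ∈ Finset.Ico b (b + N),
            ((fun t => X (s + 1, t) - X (s, t)) (t + 1) -
              (fun t => X (s + 1, t) - X (s, t)) t) :=
          Finset.sum_congr rfl (fun t _ => by unfold diffOp; first | (dsimp only; abel) | abel)
      _ = _ := by rw [h]
  calc ∑ s ∈ Finset.Ico a (a + M), ∑ t ∈ Finset.Ico b (b + N), diffOp X (s, t)
      = ∑ s ∈ Finset.Ico a (a + M),
          ((fun s => X (s, b + N) - X (s, b)) (s + 1) -
            (fun s => X (s, b + N) - X (s, b)) s) :=
        Finset.sum_congr rfl (fun s _ => by rw [inner s]; first | (dsimp only; abel) | abel)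
    _ = _ := by rw [tele (fun s => X (s, b + N) - X (s, b)) a M]; first | (dsimp only; abel) | abel

lemma sigma_diff {m n : ℕ} {c : V} {X : ℕ × ℕ → V} (h : Boxed m n c X) (i : ℕ × ℕ) :
    sigmaOp (diffOp X) i = X i - c := by
  unfold sigmaOp
  have key : ∑ᶠ p ∈ {p : ℕ × ℕ | i.1 ≤ p.1 ∧ i.2 ≤ p.2}, diffOp X p
      = ∑ p ∈ Finset.Ico i.1 (i.1 + m) ×ˢ Finset.Ico i.2 (i.2 + n), diffOp X p := by
    apply finsum_mem_eq_sum_of_inter_support_eq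
    ext p
    simp only [Set.mem_inter_iff, Set.mem_setOf_eq, Function.mem_support,
      Finset.coe_sort_coe, Finset.mem_coe, Finset.mem_product, Finset.mem_Ico]
    constructor
    · rintro ⟨⟨h1, h2⟩, hp⟩
      have hb := diffOp_boxed h p
      refine ⟨⟨⟨h1, ?_⟩, h2, ?_⟩, hp⟩
      · by_contra hcc; exact hp (hb (Or.inl (by omega)))
      · by_contra hcc; exact hp (hb (Or.inr (by omega)))
    · rintro ⟨⟨⟨h1, _⟩, h2, _⟩, hp⟩
      exact ⟨⟨h1, h2⟩, hp⟩
  rw [key, Finset.sum_product, rect X i.1 i.2 m n,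
    h (i.1 + m, i.2 + n) (Or.inl (show m ≤ i.1 + m by omega)),
    h (i.1 + m, i.2) (Or.inl (show m ≤ i.1 + m by omega)),
    h (i.1, i.2 + n) (Or.inr (show n ≤ i.2 + n by omega))]
  have : X (i.1, i.2) = X i := rfl
  rw [this]
  abel

/-! ### bconc -/

lemma bconc_apply {X : ℕ × ℕ → V} {c : V}
    (hc : Boxed (rowsC X) (colsC X) c X) (Y : ℕ × ℕ → V) (i : ℕ × ℕ) :
    bconc X Y i = X i - c + Y (i.1 - rowsC X, i.2 - colsC X) := by
  unfold bconc
  rw [Pi.add_apply, sigma_diff hc, warp0_iter, warp1_iter]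

lemma bconc_spec {X Y : ℕ × ℕ → V} {cX cY : V}
    (hcX : Boxed (rowsC X) (colsC X) cX X) (hcY : Boxed (rowsC Y) (colsC Y) cY Y) :
    rowsC (bconc X Y) = rowsC X + rowsC Y ∧ colsC (bconc X Y) = colsC X + colsC Y ∧
      Boxed (rowsC (bconc X Y)) (colsC (bconc X Y)) cY (bconc X Y) := by
  have hB : Boxed (rowsC X + rowsC Y) (colsC X + colsC Y) cY (bconc X Y) := by
    intro i hi
    rw [bconc_apply hcX]
    rcases hi with hi | hi
    · rw [hcX i (Or.inl (by omega)),
        hcY _ (Or.inl (show rowsC Y ≤ i.1 - rowsC X by omega))]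
      abel
    · rw [hcX i (Or.inr (by omega)),
        hcY _ (Or.inr (show colsC Y ≤ i.2 - colsC X by omega))]
      abel
  have hle_r : rowsC (bconc X Y) ≤ rowsC X + rowsC Y := rowsC_le hB
  have hle_c : colsC (bconc X Y) ≤ colsC X + colsC Y := colsC_le hB
  obtain ⟨c', hc'⟩ := exists_boxed hB.evC
  have hcc : c' = cY := boxed_congr hc' hB
  rw [hcc] at hc' 
  have hge_r : rowsC X + rowsC Y ≤ rowsC (bconc X Y) := by
    by_contra hlt
    push_neg at hlt
    rcases Nat.eq_zero_or_pos (rowsC Y) with h0 | hpos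
    · have hYconst : ∀ j : ℕ × ℕ, Y j = cY := fun j => hcY j (Or.inl (by omega))
      have hX0 : ∀ i : ℕ × ℕ, rowsC (bconc X Y) ≤ i.1 → X i = cX := by
        intro i hi
        have heq := hc' i (Or.inl hi)
        rw [bconc_apply hcX, hYconst] at heq
        have h2 : X i - cX = 0 := by
          apply add_right_cancel (b := cY)
          rw [heq, zero_add]
        exact sub_eq_zero.mp h2
      have := rowsC_le_of hcX hX0
      omega
    · have hw : ¬ (∀ j : ℕ × ℕ, rowsC Y - 1 ≤ j.1 → Y j = cY) := by
        intro hall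
        have := rowsC_le_of hcY hall
        omega
      push_neg at hw
      obtain ⟨j, hj1, hj2⟩ := hw
      have hBj := hc' (j.1 + rowsC X, j.2 + colsC X)
        (Or.inl (show rowsC (bconc X Y) ≤ j.1 + rowsC X by omega))
      rw [bconc_apply hcX,
        hcX _ (Or.inl (show rowsC X ≤ j.1 + rowsC X by omega))] at hBj
      have harg : ((j.1 + rowsC X, j.2 + colsC X).1 - rowsC X,
          (j.1 + rowsC X, j.2 + colsC X).2 - colsC X) = j := by
        exact Prod.ext (by dsimp; omega) (by dsimp; omega)
      rw [harg] at hBj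
      apply hj2
      rw [← hBj]
      abel
  have hge_c : colsC X + colsC Y ≤ colsC (bconc X Y) := by
    by_contra hlt
    push_neg at hlt
    rcases Nat.eq_zero_or_pos (colsC Y) with h0 | hpos
    · have hYconst : ∀ j : ℕ × ℕ, Y j = cY := fun j => hcY j (Or.inr (by omega))
      have hX0 : ∀ i : ℕ × ℕ, colsC (bconc X Y) ≤ i.2 → X i = cX := by
        intro i hi
        have heq := hc' i (Or.inr hi)
        rw [bconc_apply hcX, hYconst] at heq
        have h2 : X i - cX = 0 := by
          apply add_right_cancel (b := cY)
          rw [heq, zero_add]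
        exact sub_eq_zero.mp h2
      have := colsC_le_of hcX hX0
      omega
    · have hw : ¬ (∀ j : ℕ × ℕ, colsC Y - 1 ≤ j.2 → Y j = cY) := by
        intro hall
        have := colsC_le_of hcY hall
        omega
      push_neg at hw
      obtain ⟨j, hj1, hj2⟩ := hw
      have hBj := hc' (j.1 + rowsC X, j.2 + colsC X)
        (Or.inr (show colsC (bconc X Y) ≤ j.2 + colsC X by omega))
      rw [bconc_apply hcX,
        hcX _ (Or.inl (show rowsC X ≤ j.1 + rowsC X by omega))] at hBj
      have harg : ((j.1 + rowsC X, j.2 + colsC X).1 - rowsC X,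
          (j.1 + rowsC X, j.2 + colsC X).2 - colsC X) = j := by
        exact Prod.ext (by dsimp; omega) (by dsimp; omega)
      rw [harg] at hBj
      apply hj2
      rw [← hBj]
      abel
  exact ⟨le_antisymm hle_r hge_r, le_antisymm hle_c hge_c, hc'⟩

lemma rows_cols_diff {X : ℕ × ℕ → V} {c : V}
    (hc : Boxed (rowsC X) (colsC X) c X) :
    rowsC (diffOp X) = rowsC X ∧ colsC (diffOp X) = colsC X := by
  have hZ : Boxed (rowsC X) (colsC X) (0 : V) (diffOp X) := diffOp_boxed hc
  obtain ⟨c', hc'⟩ := exists_boxed hZ.evC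
  have hcc : c' = 0 := boxed_congr hc' hZ
  subst hcc
  constructor
  · refine le_antisymm (rowsC_le hZ) ?_
    by_contra hlt
    push_neg at hlt
    have hX0 : ∀ i : ℕ × ℕ, rowsC (diffOp X) ≤ i.1 → X i = c := by
      intro i hi
      have hs := sigma_diff hc i
      have hz : sigmaOp (diffOp X) i = 0 := by
        unfold sigmaOp
        apply finsum_mem_of_eqOn_zero
        intro p hp
        exact hc' p (Or.inl (le_trans hi hp.1))
      rw [hz] at hs
      exact sub_eq_zero.mp hs.symm
    exact absurd (rowsC_le_of hc hX0) (by omega)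
  · refine le_antisymm (colsC_le hZ) ?_
    by_contra hlt
    push_neg at hlt
    have hX0 : ∀ i : ℕ × ℕ, colsC (diffOp X) ≤ i.2 → X i = c := by
      intro i hi
      have hs := sigma_diff hc i
      have hz : sigmaOp (diffOp X) i = 0 := by
        unfold sigmaOp
        apply finsum_mem_of_eqOn_zero
        intro p hp
        exact hc' p (Or.inr (le_trans hi hp.2))
      rw [hz] at hs
      exact sub_eq_zero.mp hs.symm
    exact absurd (colsC_le_of hc hX0) (by omega)

lemma diff_bconc {X : ℕ × ℕ → V} {cX : V}
    (hcX : Boxed (rowsC X) (colsC X) cX X) (Y : ℕ × ℕ → V) (i : ℕ × ℕ) :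
    diffOp (bconc X Y) i = diffOp X i +
      (if i.1 < rowsC X ∨ i.2 < colsC X then 0
        else diffOp Y (i.1 - rowsC X, i.2 - colsC X)) := by
  unfold diffOp
  simp only [bconc_apply hcX]
  by_cases h1 : i.1 < rowsC X
  · rw [if_pos (Or.inl h1), show i.1 + 1 - rowsC X = i.1 - rowsC X by omega]
    abel
  · by_cases h2 : i.2 < colsC X
    · rw [if_pos (Or.inr h2), show i.2 + 1 - colsC X = i.2 - colsC X by omega]
      abel
    · rw [if_neg (by omega), show i.1 + 1 - rowsC X = (i.1 - rowsC X) + 1 by omega,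
        show i.2 + 1 - colsC X = (i.2 - colsC X) + 1 by omega]
      abel

lemma dconc_apply (A B : ℕ × ℕ → V) (i : ℕ × ℕ) :
    dconc A B i = A i + (if i.1 < rowsC A then 0 else
      if i.2 < colsC A then 0 else B (i.1 - rowsC A, i.2 - colsC A)) := by
  unfold dconc
  rw [Pi.add_apply, zeroIns0_iter, zeroIns1_iter]

end TwoParamAux

open TwoParam in
/-- size additivity, associativity of `⊠`, and compatibility
`δ(X ⊠ Y) = δX ⊘ δY`. -/
theorem statement12 {d : ℕ} {R : Type*} [CommRing R] [IsDomain R]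
    (X Y W : ℕ × ℕ → Fin d → R) (hX : EvC X) (hY : EvC Y) (hW : EvC W) :
    rowsC (bconc X Y) = rowsC X + rowsC Y ∧
    colsC (bconc X Y) = colsC X + colsC Y ∧
    bconc (bconc X Y) W = bconc X (bconc Y W) ∧
    diffOp (bconc X Y) = dconc (diffOp X) (diffOp Y) := by
  obtain ⟨cX, hcX⟩ := TwoParamAux.exists_boxed hX
  obtain ⟨cY, hcY⟩ := TwoParamAux.exists_boxed hY
  obtain ⟨cW, hcW⟩ := TwoParamAux.exists_boxed hW
  obtain ⟨hr, hc, hB⟩ := TwoParamAux.bconc_spec hcX hcY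
  refine ⟨hr, hc, ?_, ?_⟩
  · obtain ⟨hr2, hc2, hB2⟩ := TwoParamAux.bconc_spec hcY hcW
    funext i
    rw [TwoParamAux.bconc_apply hB, TwoParamAux.bconc_apply hcX,
      TwoParamAux.bconc_apply hcX, TwoParamAux.bconc_apply hcY, hr, hc]
    dsimp only
    rw [show i.1 - rowsC X - rowsC Y = i.1 - (rowsC X + rowsC Y) by omega,
      show i.2 - colsC X - colsC Y = i.2 - (colsC X + colsC Y) by omega]
    abel
  · obtain ⟨hrd, hcd⟩ := TwoParamAux.rows_cols_diff hcX
    funext i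
    rw [TwoParamAux.diff_bconc hcX, TwoParamAux.dconc_apply, hrd, hcd]
    congr 1
    split_ifs <;> first | rfl | (exfalso; omega)
end

section
/- Chen's identity with respect to diagonal deconcatenation: for all A, B ∈ evZ, all bounds ℓ, r ∈ ℕ₀² with ℓ ≤ size(A) ≤ r (product order), and every matrix composition a over M_d, ⟨SS_{ℓ;r}(A ⊘ B), a⟩ = Σ_{(b,c): diag(b,c)=a} ⟨SS_{ℓ;size(A)}(A ⊘ B), b⟩ · ⟨SS_{size(A);r}(A ⊘ B), c⟩, the sum ranging over all pairs of matrix compositions (b,c) with diag(b,c) = a. Equivalently, ⟨SS(A ⊘ B), a⟩ = Σ_{(b,c): diag(b,c)=a} ⟨SS(A), b⟩ · ⟨SS(B), c⟩ for every matrix composition a. -/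
open scoped Classical

namespace TwoParam

/-! ### Two-parameter data: eventually zero / eventually constant functions -/

variable {V : Type*}

/-! ## Auxiliary lemmas -/

section Aux
variable {d : ℕ} {R : Type*} [CommRing R]

lemma evalMon_zero_monomial (z : Fin d → R) : evalMon z 0 = 1 := by
  simp [evalMon]

lemma evalMon_zero_of_ne (m : Md d) (hm : m ≠ 0) : evalMon (0 : Fin d → R) m = 0 := by
  obtain ⟨j, hj⟩ := Finsupp.support_nonempty_iff.2 hm
  refine Finset.prod_eq_zero hj ?_
  have : m j ≠ 0 := Finsupp.mem_support_iff.1 hj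
  simp [zero_pow this]

lemma axC_zero (i : ℕ × ℕ) : axC 0 i = i.1 := rfl
lemma axC_one (i : ℕ × ℕ) : axC 1 i = i.2 := by simp [axC]
lemma shiftD_zero (i : ℕ × ℕ) : shiftD 0 i = (i.1 - 1, i.2) := rfl
lemma shiftD_one (i : ℕ × ℕ) : shiftD 1 i = (i.1, i.2 - 1) := by simp [shiftD]

lemma zeroIns_iter_zero_apply [Zero V] (m : ℕ) (X : ℕ × ℕ → V) (i : ℕ × ℕ) :
    (zeroIns (0 : Fin 2) 0)^[m] X i = if i.1 < m then 0 else X (i.1 - m, i.2) := by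
  induction m generalizing i with
  | zero => simp
  | succ m ih =>
    rw [Function.iterate_succ_apply']
    simp only [zeroIns, axC_zero, shiftD_zero]
    rcases Nat.eq_zero_or_pos i.1 with h | h
    · simp [h]
    · simp only [show ¬ (i.1 < 0) by omega, show i.1 ≠ 0 by omega, if_false, ih]
      by_cases h2 : i.1 < m + 1
      · rw [if_pos (by omega), if_pos (by omega)]
      · rw [if_neg (by omega), if_neg (by omega)]
        congr 2
        omega

lemma zeroIns_iter_one_apply [Zero V] (m : ℕ) (X : ℕ × ℕ → V) (i : ℕ × ℕ) :
    (zeroIns (1 : Fin 2) 0)^[m] X i = if i.2 < m then 0 else X (i.1, i.2 - m) := by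
  induction m generalizing i with
  | zero => simp
  | succ m ih =>
    rw [Function.iterate_succ_apply']
    have h1 : (1 : Fin 2) ≠ 0 := by decide
    simp only [zeroIns, axC_one, shiftD_one]
    rcases Nat.eq_zero_or_pos i.2 with h | h
    · simp [h]
    · rw [if_neg (by omega), if_neg (by omega), ih]
      by_cases h2 : i.2 < m + 1
      · rw [if_pos (by omega), if_pos (by omega)]
      · rw [if_neg (by omega), if_neg (by omega)]
        congr 2
        omega

lemma rowsZ_bound [Zero V] {Z : ℕ × ℕ → V} (hZ : EvZ Z) :
    ∀ i : ℕ × ℕ, Z i ≠ 0 → i.1 < rowsZ Z := by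
  have hne : {m : ℕ | ∀ i : ℕ × ℕ, Z i ≠ 0 → i.1 < m}.Nonempty := by
    refine ⟨(hZ.toFinset.image Prod.fst).sup id + 1, fun i hi => ?_⟩
    have : i ∈ hZ.toFinset := (Set.Finite.mem_toFinset hZ).2 hi
    have : i.1 ∈ hZ.toFinset.image Prod.fst := Finset.mem_image_of_mem _ this
    have := Finset.le_sup (f := id) this
    simp only [id_eq] at this
    omega
  exact Nat.sInf_mem hne

lemma colsZ_bound [Zero V] {Z : ℕ × ℕ → V} (hZ : EvZ Z) :
    ∀ i : ℕ × ℕ, Z i ≠ 0 → i.2 < colsZ Z := by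
  have hne : {m : ℕ | ∀ i : ℕ × ℕ, Z i ≠ 0 → i.2 < m}.Nonempty := by
    refine ⟨(hZ.toFinset.image Prod.snd).sup id + 1, fun i hi => ?_⟩
    have : i ∈ hZ.toFinset := (Set.Finite.mem_toFinset hZ).2 hi
    have : i.2 ∈ hZ.toFinset.image Prod.snd := Finset.mem_image_of_mem _ this
    have := Finset.le_sup (f := id) this
    simp only [id_eq] at this
    omega
  exact Nat.sInf_mem hne

lemma dconcZ_apply [AddCommGroup V] (A B : ℕ × ℕ → V) (hA : EvZ A) (i : ℕ × ℕ) :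
    dconcZ A B i = if i.1 < rowsZ A ∧ i.2 < colsZ A then A i
      else if rowsZ A ≤ i.1 ∧ colsZ A ≤ i.2 then B (i.1 - rowsZ A, i.2 - colsZ A)
      else 0 := by
  have hAz : ∀ j : ℕ × ℕ, rowsZ A ≤ j.1 ∨ colsZ A ≤ j.2 → A j = 0 := by
    intro j hj
    by_contra h
    have h1 := rowsZ_bound hA j h
    have h2 := colsZ_bound hA j h
    omega
  show A i + _ = _
  rw [zeroIns_iter_zero_apply, zeroIns_iter_one_apply]
  by_cases h1 : i.1 < rowsZ A
  · by_cases h2 : i.2 < colsZ A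
    · rw [if_pos h1, if_pos ⟨h1, h2⟩, add_zero]
    · rw [if_pos h1, if_neg (by omega), if_neg (by omega), hAz i (Or.inr (by omega)), add_zero]
  · by_cases h2 : i.2 < colsZ A
    · rw [if_neg h1, if_pos h2, if_neg (by omega), if_neg (by omega),
        hAz i (Or.inl (by omega)), add_zero]
    · rw [if_neg h1, if_neg h2, if_neg (by omega), if_pos ⟨by omega, by omega⟩,
        hAz i (Or.inl (by omega)), zero_add]

end Aux

/-! ## Chain machinery -/

section Chains
variable {R : Type*} [CommRing R]

lemma mem_chainsB {m lo hi : ℕ} {ι : Fin m → ℕ} :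
    ι ∈ chainsB m lo hi ↔ (∀ s, lo ≤ ι s ∧ ι s < hi) ∧ StrictMono ι := by
  simp [chainsB, Fintype.mem_piFinset, Finset.mem_Ico, forall_and]

noncomputable def splitCt (m mid : ℕ) (ι : Fin m → ℕ) : ℕ :=
  (Finset.univ.filter fun s => ι s < mid).card

lemma splitCt_le {m mid : ℕ} (ι : Fin m → ℕ) : splitCt m mid ι ≤ m := by
  classical
  calc (Finset.univ.filter fun s => ι s < mid).card ≤ Finset.univ.card :=
        Finset.card_le_card (Finset.filter_subset _ _)
    _ = m := by simp

lemma splitCt_spec {m mid : ℕ} {ι : Fin m → ℕ} (hι : StrictMono ι) (s : Fin m) :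
    ι s < mid ↔ (s : ℕ) < splitCt m mid ι := by
  classical
  set D := Finset.univ.filter fun s : Fin m => ι s < mid with hD
  have hcard : splitCt m mid ι = D.card := rfl
  constructor
  · intro h
    have hsub : Finset.Iic s ⊆ D := by
      intro t ht
      simp only [Finset.mem_Iic] at ht
      simp only [hD, Finset.mem_filter, Finset.mem_univ, true_and]
      exact lt_of_le_of_lt (hι.monotone ht) h
    have := Finset.card_le_card hsub
    rw [Fin.card_Iic] at this
    omega
  · intro h
    by_contra hc
    have hsub : D ⊆ Finset.Iio s := by
      intro t ht
      simp only [hD, Finset.mem_filter, Finset.mem_univ, true_and] at ht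
      simp only [Finset.mem_Iio]
      by_contra h2
      exact hc (lt_of_le_of_lt (hι.monotone (not_lt.1 h2)) ht)
    have := Finset.card_le_card hsub
    rw [Fin.card_Iio] at this
    omega

lemma card_filter_val_lt {m s₀ : ℕ} (hs : s₀ ≤ m) :
    (Finset.univ.filter fun s : Fin m => (s : ℕ) < s₀).card = s₀ := by
  classical
  have himg : (Finset.univ.filter fun s : Fin m => (s : ℕ) < s₀)
      = (Finset.univ : Finset (Fin s₀)).image (Fin.castLE hs) := by
    ext s
    simp only [Finset.mem_filter, Finset.mem_univ, true_and, Finset.mem_image]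
    constructor
    · intro h
      exact ⟨⟨(s : ℕ), h⟩, by ext; simp [Fin.castLE]⟩
    · rintro ⟨t, -, rfl⟩
      simpa [Fin.castLE] using t.2
  rw [himg, Finset.card_image_of_injective _ (Fin.castLE_injective hs)]
  simp

/-- Glue two chains. -/
def glueF {m : ℕ} (s₀ : ℕ) (ι₁ : Fin s₀ → ℕ) (ι₂ : Fin (m - s₀) → ℕ) : Fin m → ℕ :=
  fun s => if h : (s : ℕ) < s₀ then ι₁ ⟨s, h⟩
    else ι₂ ⟨(s : ℕ) - s₀, by omega⟩

lemma glueF_lt {m s₀ : ℕ} (ι₁ : Fin s₀ → ℕ) (ι₂ : Fin (m - s₀) → ℕ)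
    {s : Fin m} (h : (s : ℕ) < s₀) : glueF s₀ ι₁ ι₂ s = ι₁ ⟨s, h⟩ := dif_pos h

lemma glueF_ge {m s₀ : ℕ} (ι₁ : Fin s₀ → ℕ) (ι₂ : Fin (m - s₀) → ℕ)
    {s : Fin m} (h : ¬ (s : ℕ) < s₀) :
    glueF s₀ ι₁ ι₂ s = ι₂ ⟨(s : ℕ) - s₀, by omega⟩ := dif_neg h

/-- The restriction maps. -/
def resL {m : ℕ} (s₀ : ℕ) (hs : s₀ ≤ m) (ι : Fin m → ℕ) : Fin s₀ → ℕ :=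
  fun s' => ι ⟨s', lt_of_lt_of_le s'.2 hs⟩
def resR {m : ℕ} (s₀ : ℕ) (ι : Fin m → ℕ) : Fin (m - s₀) → ℕ :=
  fun s' => ι ⟨(s' : ℕ) + s₀, by omega⟩

lemma glueF_res {m s₀ : ℕ} (hs : s₀ ≤ m) (ι : Fin m → ℕ) :
    glueF s₀ (resL s₀ hs ι) (resR s₀ ι) = ι := by
  funext s
  rcases lt_or_ge (s : ℕ) s₀ with h | h
  · rw [glueF_lt _ _ h]
    simp [resL]
  · rw [glueF_ge _ _ (by omega)]
    simp only [resR]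
    congr 1
    ext
    simp
    omega

lemma glueF_mem_chains {m s₀ lo mid hi : ℕ} (h1 : lo ≤ mid) (h2 : mid ≤ hi) (hsm : s₀ ≤ m)
    {ι₁ : Fin s₀ → ℕ} {ι₂ : Fin (m - s₀) → ℕ}
    (hι₁ : ι₁ ∈ chainsB s₀ lo mid) (hι₂ : ι₂ ∈ chainsB (m - s₀) mid hi) :
    glueF s₀ ι₁ ι₂ ∈ (chainsB m lo hi).filter (fun ι => splitCt m mid ι = s₀) := by
  rw [mem_chainsB] at hι₁ hι₂
  obtain ⟨hb₁, hm₁⟩ := hι₁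
  obtain ⟨hb₂, hm₂⟩ := hι₂
  have hmono : StrictMono (glueF s₀ ι₁ ι₂) := by
    intro u v huv
    have huv' : (u : ℕ) < (v : ℕ) := huv
    rcases lt_or_ge (u : ℕ) s₀ with hu | hu
    · rcases lt_or_ge (v : ℕ) s₀ with hv | hv
      · rw [glueF_lt _ _ hu, glueF_lt _ _ hv]
        exact hm₁ (Fin.mk_lt_mk.2 huv')
      · rw [glueF_lt _ _ hu, glueF_ge _ _ (by omega)]
        exact lt_of_lt_of_le (hb₁ _).2 (hb₂ _).1
    · rw [glueF_ge _ _ (by omega), glueF_ge _ _ (by omega)]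
      exact hm₂ (Fin.mk_lt_mk.2 (by omega))
  have hval : ∀ s : Fin m, glueF s₀ ι₁ ι₂ s < mid ↔ (s : ℕ) < s₀ := by
    intro s
    rcases lt_or_ge (s : ℕ) s₀ with h | h
    · rw [glueF_lt _ _ h]
      simp only [h, iff_true]
      exact (hb₁ _).2
    · rw [glueF_ge _ _ (by omega)]
      have hge := (hb₂ (⟨(s : ℕ) - s₀, by omega⟩ : Fin (m - s₀))).1
      constructor
      · intro hlt
        exact absurd (lt_of_le_of_lt hge hlt) (lt_irrefl _)
      · intro hlt
        omega
  rw [Finset.mem_filter]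
  constructor
  · rw [mem_chainsB]
    refine ⟨fun s => ?_, hmono⟩
    rcases lt_or_ge (s : ℕ) s₀ with h | h
    · rw [glueF_lt _ _ h]
      exact ⟨(hb₁ _).1, lt_of_lt_of_le (hb₁ _).2 h2⟩
    · rw [glueF_ge _ _ (by omega)]
      exact ⟨le_trans h1 (hb₂ _).1, (hb₂ _).2⟩
  · have heq : (Finset.univ.filter fun s : Fin m => glueF s₀ ι₁ ι₂ s < mid)
        = Finset.univ.filter fun s : Fin m => (s : ℕ) < s₀ :=
      Finset.filter_congr fun s _ => by simp [hval s]
    rw [splitCt, heq, card_filter_val_lt hsm]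

/-- Splitting a fiber of chains at `mid` into a product of two chain sets. -/
lemma sum_chains_split {m s₀ lo mid hi : ℕ} (h1 : lo ≤ mid) (h2 : mid ≤ hi)
    (hs : s₀ ≤ m) (f : (Fin m → ℕ) → R) :
    ∑ ι ∈ (chainsB m lo hi).filter (fun ι => splitCt m mid ι = s₀), f ι
    = ∑ ι₁ ∈ chainsB s₀ lo mid, ∑ ι₂ ∈ chainsB (m - s₀) mid hi,
        f (glueF s₀ ι₁ ι₂) := by
  classical
  rw [← Finset.sum_product']
  refine Finset.sum_nbij'
    (i := fun ι => (resL s₀ hs ι, resR s₀ ι))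
    (j := fun p => glueF s₀ p.1 p.2) ?_ ?_ ?_ ?_ ?_
  · intro ι hι
    rw [Finset.mem_filter] at hι
    obtain ⟨hι', hct⟩ := hι
    rw [mem_chainsB] at hι'
    obtain ⟨hb, hm⟩ := hι'
    have hspec : ∀ s : Fin m, ι s < mid ↔ (s : ℕ) < s₀ := by
      intro s; rw [splitCt_spec hm s, hct]
    rw [Finset.mem_product]
    constructor
    · rw [mem_chainsB]
      exact ⟨fun s' => ⟨(hb _).1, (hspec _).2 s'.2⟩,
        fun u v huv => hm (Fin.mk_lt_mk.2 huv)⟩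
    · rw [mem_chainsB]
      refine ⟨fun s' => ⟨?_, (hb _).2⟩, fun u v huv => by
        have huv' : (u : ℕ) < (v : ℕ) := huv
        exact hm (Fin.mk_lt_mk.2 (by omega))⟩
      have : ¬ ι ⟨(s' : ℕ) + s₀, by omega⟩ < mid := by
        rw [hspec]
        simp
      simpa [resR, not_lt] using this
  · rintro ⟨ι₁, ι₂⟩ hp
    rw [Finset.mem_product] at hp
    exact glueF_mem_chains h1 h2 hs hp.1 hp.2
  · intro ι hι
    exact glueF_res hs ι
  · rintro ⟨ι₁, ι₂⟩ hp
    rw [Finset.mem_product] at hp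
    obtain ⟨h₁, h₂⟩ := hp
    dsimp only
    refine Prod.ext ?_ ?_ <;> funext s' <;> dsimp only [resL, resR]
    · rw [glueF_lt (s := ⟨(s' : ℕ), lt_of_lt_of_le s'.2 hs⟩) _ _ s'.2]
    · rw [glueF_ge (s := ⟨(s' : ℕ) + s₀, by omega⟩) _ _ (not_lt.2 (Nat.le_add_left s₀ _))]
      congr 1
      ext
      simp
  · intro ι hι
    dsimp only
    rw [glueF_res hs ι]

end Chains

/-! ## Blocks of RawMat -/

section Blocks
variable {d : ℕ}

lemma RawMat.ext' {a b : RawMat d} (h1 : a.rows = b.rows) (h2 : a.cols = b.cols)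
    (h3 : a.entry = b.entry) : a = b := by
  cases a
  cases b
  simp_all

lemma RawMat.diag_entry (b c : RawMat d) (i j : ℕ) :
    (b.diag c).entry i j = if i < b.rows ∧ j < b.cols then b.entry i j
      else if b.rows ≤ i ∧ b.cols ≤ j then c.entry (i - b.rows) (j - b.cols)
      else 0 := rfl

/-- Top-left block. -/
def blockTL (a : RawMat d) (s₀ t₀ : ℕ) : RawMat d where
  rows := s₀
  cols := t₀
  entry := fun i j => if i < s₀ ∧ j < t₀ then a.entry i j else 0
  entry_eq_zero := by
    intro i j h
    show (if i < s₀ ∧ j < t₀ then a.entry i j else 0) = 0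
    rw [if_neg (by omega)]

/-- Bottom-right block. -/
def blockBR (a : RawMat d) (s₀ t₀ : ℕ) : RawMat d where
  rows := a.rows - s₀
  cols := a.cols - t₀
  entry := fun i j => a.entry (i + s₀) (j + t₀)
  entry_eq_zero := by
    intro i j h
    exact a.entry_eq_zero _ _ (by omega)

/-- Off-diagonal-blocks vanishing condition for a split `(s₀, t₀)`. -/
def OffZero (a : RawMat d) (s₀ t₀ : ℕ) : Prop :=
  ∀ i j : ℕ, ((i < s₀ ∧ t₀ ≤ j) ∨ (s₀ ≤ i ∧ j < t₀)) → a.entry i j = 0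

lemma diag_blocks {a : RawMat d} {s₀ t₀ : ℕ} (hs : s₀ ≤ a.rows) (ht : t₀ ≤ a.cols)
    (hoff : OffZero a s₀ t₀) : (blockTL a s₀ t₀).diag (blockBR a s₀ t₀) = a := by
  refine RawMat.ext' (by simp [RawMat.diag, blockTL, blockBR]; omega)
    (by simp [RawMat.diag, blockTL, blockBR]; omega) ?_
  funext i j
  show (if i < s₀ ∧ j < t₀ then (blockTL a s₀ t₀).entry i j
    else if s₀ ≤ i ∧ t₀ ≤ j then (blockBR a s₀ t₀).entry (i - s₀) (j - t₀) else 0) = a.entry i j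
  split_ifs with h1 h2
  · rw [show (blockTL a s₀ t₀).entry i j = a.entry i j from if_pos h1]
  · show a.entry (i - s₀ + s₀) (j - t₀ + t₀) = a.entry i j
    congr 1 <;> omega
  · exact (hoff i j (by omega)).symm

lemma blockTL_comp {a : RawMat d} {s₀ t₀ : ℕ} (ha : a.IsComp)
    (hs : s₀ ≤ a.rows) (ht : t₀ ≤ a.cols) (hoff : OffZero a s₀ t₀) :
    (blockTL a s₀ t₀).IsComp := by
  constructor
  · intro i hi
    replace hi : i < s₀ := hi
    obtain ⟨j, hj, hne⟩ := ha.1 i (by omega)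
    have hjt : j < t₀ := by
      by_contra hc
      exact hne (hoff i j (by omega))
    exact ⟨j, hjt, by rwa [show (blockTL a s₀ t₀).entry i j = a.entry i j from if_pos ⟨hi, hjt⟩]⟩
  · intro j hj
    replace hj : j < t₀ := hj
    obtain ⟨i, hi, hne⟩ := ha.2 j (by omega)
    have his : i < s₀ := by
      by_contra hc
      exact hne (hoff i j (by omega))
    exact ⟨i, his, by rwa [show (blockTL a s₀ t₀).entry i j = a.entry i j from if_pos ⟨his, hj⟩]⟩

lemma blockBR_comp {a : RawMat d} {s₀ t₀ : ℕ} (ha : a.IsComp)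
    (hs : s₀ ≤ a.rows) (ht : t₀ ≤ a.cols) (hoff : OffZero a s₀ t₀) :
    (blockBR a s₀ t₀).IsComp := by
  constructor
  · intro i hi
    obtain ⟨j, hj, hne⟩ := ha.1 (i + s₀) (by simp [blockBR] at hi; omega)
    have hjt : t₀ ≤ j := by
      by_contra hc
      exact hne (hoff (i + s₀) j (by omega))
    refine ⟨j - t₀, by simp [blockBR]; omega, ?_⟩
    show a.entry (i + s₀) (j - t₀ + t₀) ≠ 0
    rwa [show j - t₀ + t₀ = j by omega]
  · intro j hj
    obtain ⟨i, hi, hne⟩ := ha.2 (j + t₀) (by simp [blockBR] at hj; omega)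
    have his : s₀ ≤ i := by
      by_contra hc
      exact hne (hoff i (j + t₀) (by omega))
    refine ⟨i - s₀, by simp [blockBR]; omega, ?_⟩
    show a.entry (i - s₀ + s₀) (j + t₀) ≠ 0
    rwa [show i - s₀ + s₀ = i by omega]

lemma blockTL_of_diag (b c : RawMat d) : blockTL (b.diag c) b.rows b.cols = b := by
  refine RawMat.ext' rfl rfl ?_
  funext i j
  show (if i < b.rows ∧ j < b.cols then (b.diag c).entry i j else 0) = b.entry i j
  split_ifs with h
  · exact if_pos h
  · exact (b.entry_eq_zero i j (by omega)).symm

lemma blockBR_of_diag (b c : RawMat d) : blockBR (b.diag c) b.rows b.cols = c := by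
  refine RawMat.ext' ?_ ?_ ?_
  · show b.rows + c.rows - b.rows = c.rows
    omega
  · show b.cols + c.cols - b.cols = c.cols
    omega
  · funext i j
    show (b.diag c).entry (i + b.rows) (j + b.cols) = c.entry i j
    by_cases h : i < c.rows ∧ j < c.cols
    · rw [RawMat.diag_entry, if_neg (by omega), if_pos ⟨by omega, by omega⟩]
      congr 1 <;> omega
    · rw [(b.diag c).entry_eq_zero _ _ (by simp [RawMat.diag]; omega),
        c.entry_eq_zero _ _ (by omega)]

lemma offZero_of_diag (b c : RawMat d) : OffZero (b.diag c) b.rows b.cols := by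
  intro i j h
  rw [RawMat.diag_entry, if_neg (by omega), if_neg (by omega)]

end Blocks

/-! ## Core bounded Chen identity -/

section Core
variable {d : ℕ} {R : Type*} [CommRing R]

lemma prod_fin_split {M : Type*} [CommMonoid M] {m s₀ : ℕ} (hs : s₀ ≤ m) (h : Fin m → M) :
    ∏ s : Fin m, h s
      = (∏ s' : Fin s₀, h ⟨s', lt_of_lt_of_le s'.2 hs⟩)
        * ∏ s' : Fin (m - s₀), h ⟨(s' : ℕ) + s₀, by omega⟩ := by
  have e : s₀ + (m - s₀) = m := by omega
  have h1 : ∏ i : Fin (s₀ + (m - s₀)), h (Fin.cast e i) = ∏ s : Fin m, h s :=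
    Fintype.prod_equiv (finCongr e) _ _ fun i => rfl
  rw [← h1, Fin.prod_univ_add]
  refine congrArg₂ (· * ·) ?_ ?_
  · exact Fintype.prod_congr _ _ fun s' => congrArg h (Fin.ext (by simp))
  · exact Fintype.prod_congr _ _ fun s' => congrArg h (Fin.ext (by simp [Nat.add_comm]))

lemma blockTL_entry (a : RawMat d) (s₀ t₀ : ℕ) (i j : ℕ) :
    (blockTL a s₀ t₀).entry i j = if i < s₀ ∧ j < t₀ then a.entry i j else 0 := rfl

lemma blockBR_entry (a : RawMat d) (s₀ t₀ : ℕ) (i j : ℕ) :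
    (blockBR a s₀ t₀).entry i j = a.entry (i + s₀) (j + t₀) := rfl

/-- Factorization of the monomial product over a block-diagonal split. -/
lemma prod_glue_factor (Z : ℕ × ℕ → Fin d → R) {a : RawMat d} {s₀ t₀ : ℕ}
    (hs : s₀ ≤ a.rows) (ht : t₀ ≤ a.cols) (hoff : OffZero a s₀ t₀)
    (ι₁ : Fin s₀ → ℕ) (ι₂ : Fin (a.rows - s₀) → ℕ)
    (κ₁ : Fin t₀ → ℕ) (κ₂ : Fin (a.cols - t₀) → ℕ) :
    (∏ s : Fin a.rows, ∏ t : Fin a.cols,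
        evalMon (Z (glueF s₀ ι₁ ι₂ s, glueF t₀ κ₁ κ₂ t)) (a.entry s t))
    = (∏ s : Fin s₀, ∏ t : Fin t₀,
        evalMon (Z (ι₁ s, κ₁ t)) ((blockTL a s₀ t₀).entry s t))
      * ∏ s : Fin (a.rows - s₀), ∏ t : Fin (a.cols - t₀),
          evalMon (Z (ι₂ s, κ₂ t)) ((blockBR a s₀ t₀).entry s t) := by
  rw [prod_fin_split hs]
  refine congrArg₂ (· * ·) ?_ ?_
  · refine Finset.prod_congr rfl fun s' _ => ?_
    rw [prod_fin_split ht]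
    have h2 : (∏ t' : Fin (a.cols - t₀),
        evalMon (Z (glueF s₀ ι₁ ι₂ ⟨(s' : ℕ), lt_of_lt_of_le s'.2 hs⟩,
          glueF t₀ κ₁ κ₂ ⟨(t' : ℕ) + t₀, by omega⟩))
          (a.entry (⟨(s' : ℕ), lt_of_lt_of_le s'.2 hs⟩ : Fin a.rows)
            (⟨(t' : ℕ) + t₀, by omega⟩ : Fin a.cols))) = 1 := by
      refine Finset.prod_eq_one fun t' _ => ?_
      rw [hoff _ _ (Or.inl ⟨s'.2, Nat.le_add_left t₀ _⟩), evalMon_zero_monomial]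
    rw [h2, mul_one]
    refine Finset.prod_congr rfl fun t' _ => ?_
    rw [glueF_lt (s := ⟨(s' : ℕ), lt_of_lt_of_le s'.2 hs⟩) _ _ s'.2,
      glueF_lt (s := ⟨(t' : ℕ), lt_of_lt_of_le t'.2 ht⟩) _ _ t'.2,
      blockTL_entry, if_pos ⟨s'.2, t'.2⟩]
  · refine Finset.prod_congr rfl fun s' _ => ?_
    rw [prod_fin_split ht]
    have h2 : (∏ t' : Fin t₀,
        evalMon (Z (glueF s₀ ι₁ ι₂ ⟨(s' : ℕ) + s₀, by omega⟩,
          glueF t₀ κ₁ κ₂ ⟨(t' : ℕ), lt_of_lt_of_le t'.2 ht⟩))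
          (a.entry (⟨(s' : ℕ) + s₀, by omega⟩ : Fin a.rows)
            (⟨(t' : ℕ), lt_of_lt_of_le t'.2 ht⟩ : Fin a.cols))) = 1 := by
      refine Finset.prod_eq_one fun t' _ => ?_
      rw [hoff _ _ (Or.inr ⟨Nat.le_add_left s₀ _, t'.2⟩), evalMon_zero_monomial]
    rw [h2, one_mul]
    refine Finset.prod_congr rfl fun t' _ => ?_
    rw [glueF_ge (s := ⟨(s' : ℕ) + s₀, by omega⟩) _ _ (not_lt.2 (Nat.le_add_left s₀ _)),
      glueF_ge (s := ⟨(t' : ℕ) + t₀, by omega⟩) _ _ (not_lt.2 (Nat.le_add_left t₀ _)),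
      blockBR_entry]
    congr 2 <;> ext <;> simp

/-- The bounded Chen identity, finite-sum form. -/
lemma chen_core (Z : ℕ × ℕ → Fin d → R) (m₁ n₁ : ℕ)
    (hoff1 : ∀ i : ℕ × ℕ, i.1 < m₁ → n₁ ≤ i.2 → Z i = 0)
    (hoff2 : ∀ i : ℕ × ℕ, m₁ ≤ i.1 → i.2 < n₁ → Z i = 0)
    (l r : ℕ × ℕ) (hl1 : l.1 ≤ m₁) (hl2 : l.2 ≤ n₁) (hr1 : m₁ ≤ r.1) (hr2 : n₁ ≤ r.2)
    (a : RawMat d) (ha : a.IsComp) :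
    SSb Z l r a = ∑ st ∈ ((Finset.range (a.rows + 1) ×ˢ Finset.range (a.cols + 1)).filter
        (fun st => OffZero a st.1 st.2)),
      SSb Z l (m₁, n₁) (blockTL a st.1 st.2) * SSb Z (m₁, n₁) r (blockBR a st.1 st.2) := by
  classical
  set m := a.rows with hm
  set n := a.cols with hn
  set P : (Fin m → ℕ) → (Fin n → ℕ) → R := fun ι κ =>
    ∏ s : Fin m, ∏ t : Fin n, evalMon (Z (ι s, κ t)) (a.entry s t) with hP
  set fibR : ℕ → Finset (Fin m → ℕ) := fun s₀ =>
    (chainsB m l.1 r.1).filter (fun ι => splitCt m m₁ ι = s₀) with hfibR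
  set fibC : ℕ → Finset (Fin n → ℕ) := fun t₀ =>
    (chainsB n l.2 r.2).filter (fun κ => splitCt n n₁ κ = t₀) with hfibC
  have stepA : SSb Z l r a
      = ∑ st ∈ Finset.range (m + 1) ×ˢ Finset.range (n + 1),
          ∑ ι ∈ fibR st.1, ∑ κ ∈ fibC st.2, P ι κ := by
    rw [Finset.sum_product]
    have hmapR : ∀ ι ∈ chainsB m l.1 r.1, splitCt m m₁ ι ∈ Finset.range (m + 1) :=
      fun ι _ => Finset.mem_range.2 (by have := splitCt_le (mid := m₁) ι; omega)
    have hmapC : ∀ κ ∈ chainsB n l.2 r.2, splitCt n n₁ κ ∈ Finset.range (n + 1) :=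
      fun κ _ => Finset.mem_range.2 (by have := splitCt_le (mid := n₁) κ; omega)
    rw [SSb, ← Finset.sum_fiberwise_of_maps_to hmapR]
    refine Finset.sum_congr rfl fun s₀ _ => ?_
    calc (∑ ι ∈ fibR s₀, ∑ κ ∈ chainsB n l.2 r.2, P ι κ)
        = ∑ ι ∈ fibR s₀, ∑ t₀ ∈ Finset.range (n + 1), ∑ κ ∈ fibC t₀, P ι κ :=
          Finset.sum_congr rfl fun ι _ => (Finset.sum_fiberwise_of_maps_to hmapC _).symm
      _ = ∑ t₀ ∈ Finset.range (n + 1), ∑ ι ∈ fibR s₀, ∑ κ ∈ fibC t₀, P ι κ :=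
          Finset.sum_comm
  have hvan : ∀ st ∈ Finset.range (m + 1) ×ˢ Finset.range (n + 1),
      (∑ ι ∈ fibR st.1, ∑ κ ∈ fibC st.2, P ι κ) ≠ 0 → OffZero a st.1 st.2 := by
    intro st hst hT
    rw [Finset.mem_product, Finset.mem_range, Finset.mem_range] at hst
    by_contra hoff
    apply hT
    simp only [OffZero, not_forall] at hoff
    obtain ⟨i, j, hij, hne⟩ := hoff
    have him : i < m := by
      by_contra hc
      exact hne (a.entry_eq_zero i j (Or.inl (by omega)))
    have hjn : j < n := by
      by_contra hc
      exact hne (a.entry_eq_zero i j (Or.inr (by omega)))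
    refine Finset.sum_eq_zero fun ι hι => Finset.sum_eq_zero fun κ hκ => ?_
    rw [hfibR, Finset.mem_filter, mem_chainsB] at hι
    rw [hfibC, Finset.mem_filter, mem_chainsB] at hκ
    obtain ⟨⟨hbι, hmι⟩, hctι⟩ := hι
    obtain ⟨⟨hbκ, hmκ⟩, hctκ⟩ := hκ
    have hspecι : ∀ s : Fin m, ι s < m₁ ↔ (s : ℕ) < st.1 := by
      intro s; rw [splitCt_spec hmι s, hctι]
    have hspecκ : ∀ t : Fin n, κ t < n₁ ↔ (t : ℕ) < st.2 := by
      intro t; rw [splitCt_spec hmκ t, hctκ]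
    refine Finset.prod_eq_zero (Finset.mem_univ (⟨i, him⟩ : Fin m)) ?_
    refine Finset.prod_eq_zero (Finset.mem_univ (⟨j, hjn⟩ : Fin n)) ?_
    have hZ0 : Z (ι ⟨i, him⟩, κ ⟨j, hjn⟩) = 0 := by
      rcases hij with ⟨hi1, hj1⟩ | ⟨hi1, hj1⟩
      · refine hoff1 _ ((hspecι ⟨i, him⟩).2 hi1) ?_
        have : ¬ κ ⟨j, hjn⟩ < n₁ := by
          rw [hspecκ]
          simpa using by omega
        omega
      · refine hoff2 _ ?_ ((hspecκ ⟨j, hjn⟩).2 hj1)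
        have : ¬ ι ⟨i, him⟩ < m₁ := by
          rw [hspecι]
          simpa using by omega
        omega
    rw [hZ0]
    exact evalMon_zero_of_ne _ hne
  rw [stepA, ← Finset.sum_filter_of_ne hvan]
  · refine Finset.sum_congr rfl fun st hst => ?_
    rw [Finset.mem_filter, Finset.mem_product, Finset.mem_range, Finset.mem_range] at hst
    obtain ⟨⟨hs', ht'⟩, hoff⟩ := hst
    have hs : st.1 ≤ m := by omega
    have ht : st.2 ≤ n := by omega
    rw [hfibR, hfibC]
    rw [sum_chains_split hl1 hr1 hs
      (f := fun ι => ∑ κ ∈ (chainsB n l.2 r.2).filter (fun κ => splitCt n n₁ κ = st.2), P ι κ)]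
    have inner : ∀ ι₁ ∈ chainsB st.1 l.1 m₁, ∀ ι₂ ∈ chainsB (m - st.1) m₁ r.1,
        (∑ κ ∈ (chainsB n l.2 r.2).filter (fun κ => splitCt n n₁ κ = st.2),
          P (glueF st.1 ι₁ ι₂) κ)
        = (∑ κ₁ ∈ chainsB st.2 l.2 n₁, ∑ κ₂ ∈ chainsB (n - st.2) n₁ r.2,
            (∏ s : Fin st.1, ∏ t : Fin st.2,
              evalMon (Z (ι₁ s, κ₁ t)) ((blockTL a st.1 st.2).entry s t))
            * ∏ s : Fin (m - st.1), ∏ t : Fin (n - st.2),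
                evalMon (Z (ι₂ s, κ₂ t)) ((blockBR a st.1 st.2).entry s t)) := by
      intro ι₁ _ ι₂ _
      rw [sum_chains_split hl2 hr2 ht (f := fun κ => P (glueF st.1 ι₁ ι₂) κ)]
      refine Finset.sum_congr rfl fun κ₁ _ => Finset.sum_congr rfl fun κ₂ _ => ?_
      exact prod_glue_factor Z hs ht hoff ι₁ ι₂ κ₁ κ₂
    rw [Finset.sum_congr rfl fun ι₁ hι₁ =>
      Finset.sum_congr rfl fun ι₂ hι₂ => inner ι₁ hι₁ ι₂ hι₂]
    have factor : (∑ ι₁ ∈ chainsB st.1 l.1 m₁, ∑ ι₂ ∈ chainsB (m - st.1) m₁ r.1,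
        ∑ κ₁ ∈ chainsB st.2 l.2 n₁, ∑ κ₂ ∈ chainsB (n - st.2) n₁ r.2,
          (∏ s : Fin st.1, ∏ t : Fin st.2,
            evalMon (Z (ι₁ s, κ₁ t)) ((blockTL a st.1 st.2).entry s t))
          * ∏ s : Fin (m - st.1), ∏ t : Fin (n - st.2),
              evalMon (Z (ι₂ s, κ₂ t)) ((blockBR a st.1 st.2).entry s t))
        = (∑ ι₁ ∈ chainsB st.1 l.1 m₁, ∑ κ₁ ∈ chainsB st.2 l.2 n₁,
            ∏ s : Fin st.1, ∏ t : Fin st.2,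
              evalMon (Z (ι₁ s, κ₁ t)) ((blockTL a st.1 st.2).entry s t))
          * (∑ ι₂ ∈ chainsB (m - st.1) m₁ r.1, ∑ κ₂ ∈ chainsB (n - st.2) n₁ r.2,
              ∏ s : Fin (m - st.1), ∏ t : Fin (n - st.2),
                evalMon (Z (ι₂ s, κ₂ t)) ((blockBR a st.1 st.2).entry s t)) := by
      rw [Finset.sum_mul_sum]
      refine Finset.sum_congr rfl fun ι₁ _ => ?_
      refine Finset.sum_congr rfl fun ι₂ _ => ?_
      rw [Finset.sum_mul_sum]
    rw [factor]
    rfl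

/-- The decomposition set as an image of a finite set of splits. -/
lemma S_eq_image (a : RawMat d) (ha : a.IsComp) :
    {bc : RawMat d × RawMat d | bc.1.IsComp ∧ bc.2.IsComp ∧ bc.1.diag bc.2 = a}
    = ↑(((Finset.range (a.rows + 1) ×ˢ Finset.range (a.cols + 1)).filter
          (fun st => OffZero a st.1 st.2)).image
        (fun st => (blockTL a st.1 st.2, blockBR a st.1 st.2))) := by
  ext bc
  simp only [Set.mem_setOf_eq, Finset.coe_image, Set.mem_image, Finset.mem_coe,
    Finset.mem_filter, Finset.mem_product, Finset.mem_range]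
  constructor
  · rintro ⟨hc1, hc2, rfl⟩
    refine ⟨(bc.1.rows, bc.1.cols), ⟨⟨?_, ?_⟩, ?_⟩, ?_⟩
    · show bc.1.rows < bc.1.rows + bc.2.rows + 1
      omega
    · show bc.1.cols < bc.1.cols + bc.2.cols + 1
      omega
    · exact offZero_of_diag bc.1 bc.2
    · rw [blockTL_of_diag, blockBR_of_diag]
  · rintro ⟨st, ⟨⟨hs', ht'⟩, hoff⟩, rfl⟩
    have hs : st.1 ≤ a.rows := by omega
    have ht : st.2 ≤ a.cols := by omega
    exact ⟨blockTL_comp ha hs ht hoff, blockBR_comp ha hs ht hoff,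
      diag_blocks hs ht hoff⟩

lemma blocks_injOn (a : RawMat d) :
    ∀ st ∈ ((Finset.range (a.rows + 1) ×ˢ Finset.range (a.cols + 1)).filter
        (fun st => OffZero a st.1 st.2)),
    ∀ st' ∈ ((Finset.range (a.rows + 1) ×ˢ Finset.range (a.cols + 1)).filter
        (fun st => OffZero a st.1 st.2)),
      (fun st => (blockTL a st.1 st.2, blockBR a st.1 st.2)) st
        = (fun st => (blockTL a st.1 st.2, blockBR a st.1 st.2)) st' → st = st' := by
  intro st _ st' _ h
  simp only [Prod.mk.injEq] at h
  have h1 : (blockTL a st.1 st.2).rows = (blockTL a st'.1 st'.2).rows := by rw [h.1]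
  have h2 : (blockTL a st.1 st.2).cols = (blockTL a st'.1 st'.2).cols := by rw [h.1]
  exact Prod.ext h1 h2

/-- Finsum over decompositions equals the finite sum over admissible splits. -/
lemma finsum_S_eq (a : RawMat d) (ha : a.IsComp) (g : RawMat d × RawMat d → R) :
    (∑ᶠ bc ∈ {bc : RawMat d × RawMat d | bc.1.IsComp ∧ bc.2.IsComp ∧ bc.1.diag bc.2 = a}, g bc)
    = ∑ st ∈ ((Finset.range (a.rows + 1) ×ˢ Finset.range (a.cols + 1)).filter
        (fun st => OffZero a st.1 st.2)),
      g (blockTL a st.1 st.2, blockBR a st.1 st.2) := by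
  rw [S_eq_image a ha, finsum_mem_coe_finset, Finset.sum_image (blocks_injOn a)]

/-- Equality of bounded signatures for pointwise-equal data in the window. -/
lemma SSb_congr {Z Z' : ℕ × ℕ → Fin d → R} (l r : ℕ × ℕ) (a : RawMat d)
    (h : ∀ i : ℕ × ℕ, l.1 ≤ i.1 → i.1 < r.1 → l.2 ≤ i.2 → i.2 < r.2 → Z i = Z' i) :
    SSb Z l r a = SSb Z' l r a := by
  refine Finset.sum_congr rfl fun ι hι => Finset.sum_congr rfl fun κ hκ => ?_
  rw [mem_chainsB] at hι hκ
  refine Finset.prod_congr rfl fun s _ => Finset.prod_congr rfl fun t _ => ?_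
  rw [h (ι s, κ t) (hι.1 s).1 (hι.1 s).2 (hκ.1 t).1 (hκ.1 t).2]

/-- Shifting chains down. -/
lemma sum_chains_shift {k m₁ R₁ : ℕ} (h : m₁ ≤ R₁) (f : (Fin k → ℕ) → R) :
    ∑ ι ∈ chainsB k m₁ R₁, f ι
      = ∑ ι ∈ chainsB k 0 (R₁ - m₁), f (fun s => ι s + m₁) := by
  refine Finset.sum_nbij' (i := fun ι => fun s => ι s - m₁)
    (j := fun ι => fun s => ι s + m₁) ?_ ?_ ?_ ?_ ?_
  · intro ι hι
    rw [mem_chainsB] at hι ⊢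
    constructor
    · intro s
      have h1 := (hι.1 s).1
      have h2 := (hι.1 s).2
      omega
    · intro u v huv
      dsimp only
      have h1 := hι.2 huv
      have h2 := (hι.1 u).1
      omega
  · intro ι hι
    rw [mem_chainsB] at hι ⊢
    constructor
    · intro s
      have h1 := (hι.1 s).2
      omega
    · intro u v huv
      dsimp only
      have h1 := hι.2 huv
      omega
  · intro ι hι
    rw [mem_chainsB] at hι
    funext s
    dsimp only
    have := (hι.1 s).1
    omega
  · intro ι hι
    funext s
    dsimp only
    omega
  · intro ι hι
    rw [mem_chainsB] at hι
    exact congrArg f (funext fun s => by dsimp only; have := (hι.1 s).1; omega)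

/-- Shifted bounded signature. -/
lemma SSb_shift (Z : ℕ × ℕ → Fin d → R) {m₁ n₁ R₁ R₂ : ℕ}
    (h1 : m₁ ≤ R₁) (h2 : n₁ ≤ R₂) (c : RawMat d) :
    SSb Z (m₁, n₁) (R₁, R₂) c
      = SSb (fun i => Z (i.1 + m₁, i.2 + n₁)) (0, 0) (R₁ - m₁, R₂ - n₁) c := by
  rw [SSb, SSb]
  rw [sum_chains_shift h1]
  refine Finset.sum_congr rfl fun ι _ => ?_
  rw [sum_chains_shift h2]

/-- Unbounded signature as a bounded one, for bounded-support data. -/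
lemma SSc_eq_SSb (Z : ℕ × ℕ → Fin d → R) {R₁ R₂ : ℕ} (a : RawMat d) (ha : a.IsComp)
    (hb : ∀ i : ℕ × ℕ, Z i ≠ 0 → i.1 < R₁ ∧ i.2 < R₂) :
    SSc Z a = SSb Z (0, 0) (R₁, R₂) a := by
  classical
  set G : (Fin a.rows → ℕ) → (Fin a.cols → ℕ) → R := fun ι κ =>
    ∏ s : Fin a.rows, ∏ t : Fin a.cols, evalMon (Z (ι s, κ t)) (a.entry s t) with hG
  have key : ∀ (ι : Fin a.rows → ℕ) (κ : Fin a.cols → ℕ), G ι κ ≠ 0 →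
      (∀ s, ι s < R₁) ∧ (∀ t, κ t < R₂) := by
    intro ι κ hne
    constructor
    · intro s
      by_contra hc
      obtain ⟨t, htlt, het⟩ := ha.1 s s.2
      apply hne
      refine Finset.prod_eq_zero (Finset.mem_univ s) ?_
      refine Finset.prod_eq_zero (Finset.mem_univ (⟨t, htlt⟩ : Fin a.cols)) ?_
      have hZ0 : Z (ι s, κ ⟨t, htlt⟩) = 0 := by
        by_contra hZ
        exact hc (hb _ hZ).1
      rw [hZ0]
      exact evalMon_zero_of_ne _ het
    · intro t
      by_contra hc
      obtain ⟨u, hult, heu⟩ := ha.2 t t.2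
      apply hne
      refine Finset.prod_eq_zero (Finset.mem_univ (⟨u, hult⟩ : Fin a.rows)) ?_
      refine Finset.prod_eq_zero (Finset.mem_univ t) ?_
      have hZ0 : Z (ι ⟨u, hult⟩, κ t) = 0 := by
        by_contra hZ
        exact hc (hb _ hZ).2
      rw [hZ0]
      exact evalMon_zero_of_ne _ heu
  have inner : ∀ ι : Fin a.rows → ℕ, StrictMono ι →
      (∑ᶠ κ ∈ {g : Fin a.cols → ℕ | StrictMono g}, G ι κ)
        = ∑ κ ∈ chainsB a.cols 0 R₂, G ι κ := by
    intro ι hι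
    refine finsum_mem_eq_sum_of_inter_support_eq _ ?_
    ext κ
    simp only [Set.mem_inter_iff, Set.mem_setOf_eq, Function.mem_support, Finset.mem_coe]
    constructor
    · rintro ⟨hSM, hne⟩
      exact ⟨mem_chainsB.2 ⟨fun t => ⟨Nat.zero_le _, (key ι κ hne).2 t⟩, hSM⟩, hne⟩
    · rintro ⟨hmem, hne⟩
      exact ⟨(mem_chainsB.1 hmem).2, hne⟩
  have outer : {f : Fin a.rows → ℕ | StrictMono f}
        ∩ Function.support (fun ι => ∑ᶠ κ ∈ {g : Fin a.cols → ℕ | StrictMono g}, G ι κ)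
      = ↑(chainsB a.rows 0 R₁)
        ∩ Function.support (fun ι => ∑ᶠ κ ∈ {g : Fin a.cols → ℕ | StrictMono g}, G ι κ) := by
    ext ι
    constructor
    · rintro ⟨hSM, hne⟩
      rw [Set.mem_setOf_eq] at hSM
      rw [Function.mem_support, inner ι hSM] at hne
      obtain ⟨κ, _, hκne⟩ := Finset.exists_ne_zero_of_sum_ne_zero hne
      refine ⟨Finset.mem_coe.2
        (mem_chainsB.2 ⟨fun s => ⟨Nat.zero_le _, (key ι κ hκne).1 s⟩, hSM⟩), ?_⟩
      rw [Function.mem_support, inner ι hSM]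
      exact hne
    · rintro ⟨hmem, hne⟩
      exact ⟨(mem_chainsB.1 (Finset.mem_coe.1 hmem)).2, hne⟩
  calc SSc Z a
      = ∑ ι ∈ chainsB a.rows 0 R₁,
          ∑ᶠ κ ∈ {g : Fin a.cols → ℕ | StrictMono g}, G ι κ :=
        finsum_mem_eq_sum_of_inter_support_eq _ outer
    _ = ∑ ι ∈ chainsB a.rows 0 R₁, ∑ κ ∈ chainsB a.cols 0 R₂, G ι κ :=
        Finset.sum_congr rfl fun ι hι => inner ι (mem_chainsB.1 hι).2
    _ = SSb Z (0, 0) (R₁, R₂) a := rfl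

end Core
end TwoParam

open TwoParam in
/-- Chen's identity with respect to diagonal
deconcatenation. -/
theorem statement14 {d : ℕ} {R : Type*} [CommRing R] [IsDomain R]
    (A B : ℕ × ℕ → Fin d → R) (hA : EvZ A) (hB : EvZ B) :
    (∀ l r : ℕ × ℕ,
      l.1 ≤ rowsZ A → l.2 ≤ colsZ A → rowsZ A ≤ r.1 → colsZ A ≤ r.2 →
      ∀ a : RawMat d, a.IsComp →
        SSb (dconcZ A B) l r a =
          ∑ᶠ bc ∈ {bc : RawMat d × RawMat d |
              bc.1.IsComp ∧ bc.2.IsComp ∧ bc.1.diag bc.2 = a},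
            SSb (dconcZ A B) l (rowsZ A, colsZ A) bc.1 *
              SSb (dconcZ A B) (rowsZ A, colsZ A) r bc.2) ∧
    (∀ a : RawMat d, a.IsComp →
      SSc (dconcZ A B) a =
        ∑ᶠ bc ∈ {bc : RawMat d × RawMat d |
            bc.1.IsComp ∧ bc.2.IsComp ∧ bc.1.diag bc.2 = a},
          SSc A bc.1 * SSc B bc.2) := by
  have hZ := dconcZ_apply A B hA
  have hoff1 : ∀ i : ℕ × ℕ, i.1 < rowsZ A → colsZ A ≤ i.2 → dconcZ A B i = 0 := by
    intro i h1 h2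
    rw [hZ i, if_neg (by omega), if_neg (by omega)]
  have hoff2 : ∀ i : ℕ × ℕ, rowsZ A ≤ i.1 → i.2 < colsZ A → dconcZ A B i = 0 := by
    intro i h1 h2
    rw [hZ i, if_neg (by omega), if_neg (by omega)]
  constructor
  · intro l r hl1 hl2 hr1 hr2 a ha
    rw [finsum_S_eq a ha]
    exact chen_core (dconcZ A B) (rowsZ A) (colsZ A) hoff1 hoff2 l r hl1 hl2 hr1 hr2 a ha
  · intro a ha
    have hZev : EvZ (dconcZ A B) := by
      refine Set.Finite.subset
        (hA.union (hB.image fun p => (p.1 + rowsZ A, p.2 + colsZ A))) ?_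
      intro i hi
      rw [Function.mem_support, hZ i] at hi
      split_ifs at hi with h1 h2
      · exact Or.inl hi
      · refine Or.inr ⟨(i.1 - rowsZ A, i.2 - colsZ A), hi, ?_⟩
        show (i.1 - rowsZ A + rowsZ A, i.2 - colsZ A + colsZ A) = i
        rw [Prod.ext_iff]
        constructor <;> simp <;> omega
      · exact absurd rfl hi
    set N₁ := max (rowsZ (dconcZ A B)) (rowsZ A + rowsZ B) with hN₁
    set N₂ := max (colsZ (dconcZ A B)) (colsZ A + colsZ B) with hN₂
    have hN1a : rowsZ A + rowsZ B ≤ N₁ := le_max_right _ _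
    have hN2a : colsZ A + colsZ B ≤ N₂ := le_max_right _ _
    have hbZ : ∀ i : ℕ × ℕ, dconcZ A B i ≠ 0 → i.1 < N₁ ∧ i.2 < N₂ := fun i hi =>
      ⟨lt_of_lt_of_le (rowsZ_bound hZev i hi) (le_max_left _ _),
        lt_of_lt_of_le (colsZ_bound hZev i hi) (le_max_left _ _)⟩
    rw [SSc_eq_SSb _ a ha hbZ,
      chen_core (dconcZ A B) (rowsZ A) (colsZ A) hoff1 hoff2 (0, 0) (N₁, N₂)
        (Nat.zero_le _) (Nat.zero_le _) (by omega) (by omega) a ha,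
      finsum_S_eq a ha]
    refine Finset.sum_congr rfl fun st hst => ?_
    rw [Finset.mem_filter, Finset.mem_product, Finset.mem_range, Finset.mem_range] at hst
    obtain ⟨⟨hs', ht'⟩, hoff⟩ := hst
    have hs : st.1 ≤ a.rows := by omega
    have ht : st.2 ≤ a.cols := by omega
    have hcTL := blockTL_comp ha hs ht hoff
    have hcBR := blockBR_comp ha hs ht hoff
    dsimp only
    congr 1
    · rw [SSc_eq_SSb A (blockTL a st.1 st.2) hcTL
        (fun i hi => ⟨rowsZ_bound hA i hi, colsZ_bound hA i hi⟩)]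
      exact SSb_congr _ _ _ fun i _ h1 _ h2 => by rw [hZ i, if_pos ⟨h1, h2⟩]
    · rw [SSc_eq_SSb B (blockBR a st.1 st.2) hcBR
        (R₁ := N₁ - rowsZ A) (R₂ := N₂ - colsZ A)
        (fun i hi => ⟨by have := rowsZ_bound hB i hi; omega,
          by have := colsZ_bound hB i hi; omega⟩)]
      rw [SSb_shift (dconcZ A B) (by omega) (by omega)]
      have hfun : (fun i : ℕ × ℕ => dconcZ A B (i.1 + rowsZ A, i.2 + colsZ A)) = B := by
        funext i
        rw [hZ _, if_neg (by omega), if_pos ⟨by omega, by omega⟩]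
        simp
      rw [hfun]
end
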